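/- Let f(x,y,z) = (y^d, z^d, x^d) as a map on P² and let α be the diagonal projective transformation (x,y,z) ↦ (ζ x, ζ^{−d} y, z) where ζ is a primitive (d²+d+1)-th root of unity. Then α⁻¹ ∘ f ∘ α = f as projective maps, so α ∈ Aut(f) and Aut(f) contains a cyclic group of order d²+d+1. -/

import Mathlib

theorem cyclic_aut_of_monomial_map {K : Type*} [Field K] (d : ℕ) (hd : 2 ≤ d)
    (ζ : K) (hζ : IsPrimitiveRoot ζ (d ^ 2 + d + 1)) :
    ∃ c : K, c ≠ 0 ∧ ∀ x y z : K,
      ((ζ⁻¹) ^ d * y) ^ d = c * (ζ * y ^ d) ∧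
      z ^ d = c * ((ζ⁻¹) ^ d * z ^ d) ∧
      (ζ * x) ^ d = c * x ^ d := by
  have hne : ζ ≠ 0 := hζ.ne_zero (by positivity)
  have hone : ζ ^ (d ^ 2 + d + 1) = 1 := hζ.pow_eq_one
  refine ⟨ζ ^ d, pow_ne_zero _ hne, fun x y z => ⟨?_, ?_, ?_⟩⟩
  · have : ζ ^ (d * d) * (ζ ^ d * ζ) = 1 := by
      rw [← pow_succ, ← pow_add]
      simpa [pow_two, mul_add, Nat.mul_succ, add_assoc] using hone
    have h2 : (ζ⁻¹) ^ (d * d) = ζ ^ d * ζ := by rw [inv_pow, inv_eq_of_mul_eq_one_right this]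
    rw [mul_pow, ← pow_mul, h2]; ring
  · rw [inv_pow, ← mul_assoc, mul_inv_cancel₀ (pow_ne_zero _ hne), one_mul]
  · ring
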